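/- arXiv:1004.4196 — 2 statements merged into one kernel-verified Lean document; each statement's English description precedes it below -/
import Mathlib

section
/- Let G be a graph and (T,B) a tree decomposition of G. Let F be the set of all pairs {u,v} of vertices of G with {u,v} ∉ E(G) such that {u,v} ⊆ B(x) for some node x of T. Then the graph G' with V(G') = V(G) and E(G') = E(G) ∪ F is chordal. -/
open SimpleGraph

namespace ChordalAux

variable {V : Type*} {W : Type*}

lemma support_getElem_eq {G : SimpleGraph V} {u v : V} (p : G.Walk u v) :
    ∀ (i : ℕ) (h : i < p.support.length), p.support[i] = p.getVert i := by
  induction p with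
  | nil =>
    intro i h
    simp only [Walk.support_nil, List.length_singleton] at h
    have : i = 0 := by omega
    subst this
    simp [Walk.getVert_zero]
  | cons ha q ih =>
    intro i h
    cases i with
    | zero => simp
    | succ i =>
      simp only [Walk.support_cons, List.getElem_cons_succ, Walk.getVert_cons_succ]
      exact ih i (by simpa [Walk.support_cons] using h)

lemma cycle_getVert_inj {G : SimpleGraph V} {v : V} {c : G.Walk v v} (hc : c.IsCycle)
    {i j : ℕ} (hi : i < c.length) (hj : j < c.length) (hij : c.getVert i = c.getVert j) :
    i = j := by
  have hnd : c.support.tail.Nodup := hc.support_nodup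
  have hlen : c.support.length = c.length + 1 := c.length_support
  have htlen : c.support.tail.length = c.length := by
    rw [List.length_tail, hlen]; omega
  have key : ∀ (k : ℕ) (_ : 0 < k) (hk : k ≤ c.length),
      c.getVert k = c.support.tail[k-1]'(by omega) := by
    intro k hk0 hk
    have h2 : c.support.tail[k-1]'(by omega) = c.support[k-1+1]'(by omega) :=
      List.getElem_tail (by omega)
    have h3 : c.support[k-1+1]'(by omega) = c.getVert (k-1+1) :=
      support_getElem_eq c (k-1+1) (by omega)
    rw [h2, h3]
    congr 1
    omega
  have hlast : c.support.tail[c.length - 1]'(by omega) = v := by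
    have := key c.length (by
      rcases Nat.eq_zero_or_pos c.length with h | h
      · exact absurd (c.eq_of_length_eq_zero h) (by intro _; exact hc.ne_nil (by
          cases c with
          | nil => rfl
          | cons h p => simp at *))
      · exact h) le_rfl
    rw [c.getVert_length] at this
    exact this.symm
  rcases Nat.eq_zero_or_pos i with hi0 | hip <;> rcases Nat.eq_zero_or_pos j with hj0 | hjp
  · omega
  · subst hi0
    exfalso
    rw [Walk.getVert_zero] at hij
    have := key j hjp (by omega)
    rw [← hij] at this
    have heq : c.support.tail[j-1]'(by omega) = c.support.tail[c.length - 1]'(by omega) := by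
      rw [← this, hlast]
    have := (hnd.getElem_inj_iff).mp heq
    omega
  · subst hj0
    exfalso
    rw [Walk.getVert_zero] at hij
    have := key i hip (by omega)
    rw [hij] at this
    have heq : c.support.tail[i-1]'(by omega) = c.support.tail[c.length - 1]'(by omega) := by
      rw [← this, hlast]
    have := (hnd.getElem_inj_iff).mp heq
    omega
  · have k1 := key i hip (by omega)
    have k2 := key j hjp (by omega)
    rw [k1, k2] at hij
    have := (hnd.getElem_inj_iff).mp hij
    omega

lemma path_getVert_inj {G : SimpleGraph V} {u v : V} {p : G.Walk u v} (hp : p.IsPath)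
    {i j : ℕ} (hi : i ≤ p.length) (hj : j ≤ p.length) (hij : p.getVert i = p.getVert j) :
    i = j := by
  have hnd : p.support.Nodup := hp.support_nodup
  have hlen : p.support.length = p.length + 1 := p.length_support
  have h1 : p.support[i]'(by omega) = p.getVert i := support_getElem_eq p i (by omega)
  have h2 : p.support[j]'(by omega) = p.getVert j := support_getElem_eq p j (by omega)
  have : p.support[i]'(by omega) = p.support[j]'(by omega) := by rw [h1, h2, hij]
  exact (hnd.getElem_inj_iff).mp this

variable {T : SimpleGraph W} {x y : W}

lemma reach_del_of_walk_avoid {S : Set W} (hy : y ∉ S) {a b : S}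
    (q : (T.induce S).Walk a b) :
    (T.deleteEdges {s(x, y)}).Reachable a.1 b.1 := by
  induction q with
  | nil => exact Reachable.refl _
  | @cons a c b hac q ih =>
    have hTac : T.Adj a.1 c.1 := hac
    have hne : s((a:W), (c:W)) ∉ ({s(x, y)} : Set (Sym2 W)) := by
      simp only [Set.mem_singleton_iff]
      intro he
      rcases Sym2.eq_iff.mp he with ⟨_, h⟩ | ⟨h, _⟩
      · exact hy (h ▸ c.2)
      · exact hy (h ▸ a.2)
    exact (SimpleGraph.Adj.reachable (SimpleGraph.deleteEdges_adj.mpr ⟨hTac, hne⟩)).trans ih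

lemma reach_side (hT : T.Connected) (x y z : W) :
    (T.deleteEdges {s(x, y)}).Reachable z x ∨ (T.deleteEdges {s(x, y)}).Reachable z y := by
  obtain ⟨p⟩ := hT.preconnected z x
  induction p with
  | nil => left; exact Reachable.refl _
  | @cons z w x' hzw q ih =>
    by_cases he : s(z, w) = s(x', y)
    · rcases Sym2.eq_iff.mp he with ⟨h1, _⟩ | ⟨h1, _⟩
      · left; rw [h1]
      · right; rw [h1]
    · have hadj : (T.deleteEdges {s(x', y)}).Adj z w :=
        SimpleGraph.deleteEdges_adj.mpr ⟨hzw, by simpa using he⟩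
      rcases ih with h | h
      · left; exact hadj.reachable.trans h
      · right; exact hadj.reachable.trans h

lemma not_reach_both (hA : T.IsAcyclic) (hxy : T.Adj x y) {z : W}
    (h1 : (T.deleteEdges {s(x, y)}).Reachable z x)
    (h2 : (T.deleteEdges {s(x, y)}).Reachable z y) : False := by
  have hb : T.IsBridge s(x, y) := (isAcyclic_iff_forall_adj_isBridge.mp hA) hxy
  exact (isBridge_iff.mp hb) (h1.symm.trans h2)

lemma cross_mem (hA : T.IsAcyclic) (hxy : T.Adj x y) {S : Set W}
    {a b : S} (q : (T.induce S).Walk a b) :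
    (T.deleteEdges {s(x, y)}).Reachable a.1 x →
    (T.deleteEdges {s(x, y)}).Reachable b.1 y → x ∈ S := by
  induction q with
  | nil => intro h1 h2; exact (not_reach_both hA hxy h1 h2).elim
  | @cons a c b hac q ih =>
    intro h1 h2
    by_cases hcx : (T.deleteEdges {s(x, y)}).Reachable c.1 x
    · exact ih hcx h2
    · have hTac : T.Adj a.1 c.1 := hac
      by_cases he : s((a:W), (c:W)) = s(x, y)
      · rcases Sym2.eq_iff.mp he with ⟨hax', _⟩ | ⟨hay', _⟩
        · exact hax' ▸ a.2
        · exact (not_reach_both hA hxy (hay' ▸ h1 : _) (Reachable.refl _)).elim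
      · have hadj : (T.deleteEdges {s(x, y)}).Adj a.1 c.1 :=
          SimpleGraph.deleteEdges_adj.mpr ⟨hTac, by simpa using he⟩
        exact (hcx (hadj.symm.reachable.trans h1)).elim

end ChordalAux

/-- A graph is chordal if every cycle of length at least four has a chord,
i.e. an edge of the graph joining two vertices of the cycle that are not
adjacent along the cycle. -/
def IsChordal {V : Type*} (G : SimpleGraph V) : Prop :=
  ∀ ⦃v : V⦄ (c : G.Walk v v), c.IsCycle → 4 ≤ c.length →
    ∃ u w, u ∈ c.support ∧ w ∈ c.support ∧ G.Adj u w ∧ ¬ c.toSubgraph.Adj u w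

/-- A tree decomposition of a graph `G`: a tree `T` with bags `B` satisfying
vertex coverage, edge coverage and coherence. -/
structure TreeDecomp {V W : Type*} (G : SimpleGraph V) (T : SimpleGraph W)
    (B : W → Set V) : Prop where
  tree : T.IsTree
  vertexCover : ∀ v, ∃ x, v ∈ B x
  edgeCover : ∀ ⦃u v⦄, G.Adj u v → ∃ x, u ∈ B x ∧ v ∈ B x
  coherent : ∀ v, (T.induce {x | v ∈ B x}).Connected

/-- Adding, for each bag, all missing edges between vertices of that bag
(the fill-in `F`) yields a chordal graph. -/
theorem chordal_fillin_of_treeDecomp {V W : Type*} (G : SimpleGraph V)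
    (T : SimpleGraph W) (B : W → Set V) (td : TreeDecomp G T B) :
    IsChordal (G ⊔ SimpleGraph.fromRel (fun u v => ∃ x, u ∈ B x ∧ v ∈ B x)) := by
  classical
  intro v c hc hlen
  by_contra hcon
  push_neg at hcon
  set n := c.length with hn
  have hT : T.Connected := td.tree.isConnected
  have hA : T.IsAcyclic := td.tree.IsAcyclic
  -- adjacency in the fill-in gives a common bag
  have bagOfAdj : ∀ {u w : V},
      (G ⊔ SimpleGraph.fromRel (fun u v => ∃ x, u ∈ B x ∧ v ∈ B x)).Adj u w →
      ∃ x, u ∈ B x ∧ w ∈ B x := by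
    intro u w h
    rcases h with h | h
    · exact td.edgeCover h
    · rcases h.2 with h' | h'
      · exact h'
      · obtain ⟨x, h1, h2⟩ := h'
        exact ⟨x, h2, h1⟩
  have memsup : ∀ i, i ≤ n → c.getVert i ∈ c.support := fun i hi =>
    Walk.mem_support_iff_exists_getVert.mpr ⟨i, rfl, hi⟩
  have hVn : c.getVert n = c.getVert 0 := by
    rw [Walk.getVert_length, Walk.getVert_zero]
  have hinj : ∀ {i j : ℕ}, i < n → j < n → c.getVert i = c.getVert j → i = j :=
    fun hi hj hij => ChordalAux.cycle_getVert_inj hc hi hj hij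
  -- key non-adjacency along the cycle
  have nonadj : ∀ a b : ℕ, a < n → b < n → b ≠ a + 1 → a ≠ b + 1 →
      ¬(a = 0 ∧ b = n - 1) → ¬(b = 0 ∧ a = n - 1) →
      ¬ c.toSubgraph.Adj (c.getVert a) (c.getVert b) := by
    intro a b ha hb hb1 ha1 hab1 hab2 hadj
    rw [Walk.toSubgraph_adj_iff] at hadj
    obtain ⟨j, hj_eq, hjlt⟩ := hadj
    rcases Sym2.eq_iff.mp hj_eq with ⟨h1, h2⟩ | ⟨h1, h2⟩
    · have hja : j = a := hinj hjlt ha h1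
      subst hja
      rcases Nat.lt_or_ge (j + 1) n with h | h
      · have : j + 1 = b := hinj h hb h2
        omega
      · have hj1 : j + 1 = n := by omega
        rw [hj1, hVn] at h2
        have : (0 : ℕ) = b := hinj (by omega) hb h2
        omega
    · have hjb : j = b := hinj hjlt hb h1
      subst hjb
      rcases Nat.lt_or_ge (j + 1) n with h | h
      · have : j + 1 = a := hinj h ha h2
        omega
      · have hj1 : j + 1 = n := by omega
        rw [hj1, hVn] at h2
        have : (0 : ℕ) = a := hinj (by omega) ha h2
        omega
  -- no common bag for v₀ and v₂
  have h02 : ∀ z : W, ¬(c.getVert 0 ∈ B z ∧ c.getVert 2 ∈ B z) := by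
    rintro z ⟨h0, h2⟩
    have hne : c.getVert 0 ≠ c.getVert 2 := by
      intro h
      have := hinj (by omega) (by omega) h
      omega
    have hadj : (G ⊔ SimpleGraph.fromRel (fun u v => ∃ x, u ∈ B x ∧ v ∈ B x)).Adj
        (c.getVert 0) (c.getVert 2) :=
      by rw [sup_adj, SimpleGraph.fromRel_adj]; exact Or.inr ⟨hne, Or.inl ⟨z, h0, h2⟩⟩
    exact nonadj 0 2 (by omega) (by omega) (by omega) (by omega)
      (by omega) (by omega)
      (hcon _ _ (memsup 0 (by omega)) (memsup 2 (by omega)) hadj)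
  obtain ⟨x0, hx0⟩ := td.vertexCover (c.getVert 0)
  obtain ⟨x2, hx2⟩ := td.vertexCover (c.getVert 2)
  obtain ⟨q0⟩ := hT.preconnected x0 x2
  let p : T.Walk x0 x2 := q0.toPath
  have hp : p.IsPath := q0.toPath.2
  set m := p.length with hm
  set istar := Nat.findGreatest (fun i => c.getVert 0 ∈ B (p.getVert i)) m with histar
  have hP0 : c.getVert 0 ∈ B (p.getVert 0) := by rw [Walk.getVert_zero]; exact hx0
  have hstar : c.getVert 0 ∈ B (p.getVert istar) :=
    Nat.findGreatest_spec (P := fun i => c.getVert 0 ∈ B (p.getVert i)) (Nat.zero_le m) hP0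
  have h_i_le : istar ≤ m :=
    Nat.findGreatest_le (P := fun i => c.getVert 0 ∈ B (p.getVert i)) m
  have hmax : ∀ j, istar < j → j ≤ m → c.getVert 0 ∉ B (p.getVert j) :=
    fun j h1 h2 =>
      Nat.findGreatest_is_greatest (P := fun i => c.getVert 0 ∈ B (p.getVert i)) h1 h2
  have h_i_lt : istar < m := by
    rcases Nat.lt_or_ge istar m with h | h
    · exact h
    · exfalso
      have : istar = m := by omega
      rw [this, Walk.getVert_length] at hstar
      exact h02 x2 ⟨hstar, hx2⟩
  set x := p.getVert istar with hxdef
  set y := p.getVert (istar + 1) with hydef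
  have hxy : T.Adj x y := p.adj_getVert_succ h_i_lt
  have hx_bag : c.getVert 0 ∈ B x := hstar
  have hy_not : c.getVert 0 ∉ B y := hmax (istar + 1) (by omega) (by omega)
  -- every node whose bag contains v₀ reaches x after deleting the edge
  have hS0x : ∀ z : W, c.getVert 0 ∈ B z → (T.deleteEdges {s(x, y)}).Reachable z x := by
    intro z hz
    obtain ⟨q⟩ := (td.coherent (c.getVert 0)).preconnected
      ⟨z, hz⟩ ⟨x, hx_bag⟩
    exact ChordalAux.reach_del_of_walk_avoid (S := {w | c.getVert 0 ∈ B w}) hy_not q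
  -- propagation along the path: later vertices reach y
  have hprop : ∀ j, istar + 1 ≤ j → j ≤ m → (T.deleteEdges {s(x, y)}).Reachable (p.getVert j) y := by
    intro j hj
    induction j, hj using Nat.le_induction with
    | base => intro _; exact Reachable.refl _
    | succ j hj ih =>
      intro hjm
      have hr := ih (by omega)
      have hadj : T.Adj (p.getVert j) (p.getVert (j + 1)) := p.adj_getVert_succ (by omega)
      by_cases he : s(p.getVert j, p.getVert (j + 1)) = s(x, y)
      · exfalso
        rcases Sym2.eq_iff.mp he with ⟨h1, _⟩ | ⟨_, h2⟩
        · have := ChordalAux.path_getVert_inj hp (by omega) (by omega) (h1 : _)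
          omega
        · have := ChordalAux.path_getVert_inj hp (by omega) (by omega) (h2 : _)
          omega
      · have hD : (T.deleteEdges {s(x, y)}).Adj (p.getVert j) (p.getVert (j + 1)) :=
          SimpleGraph.deleteEdges_adj.mpr ⟨hadj, by simpa using he⟩
        exact hD.symm.reachable.trans hr
  have hx2y : (T.deleteEdges {s(x, y)}).Reachable x2 y := by
    have := hprop m (by omega) le_rfl
    rwa [Walk.getVert_length] at this
  -- every node whose bag contains v₂ reaches y
  have hS2y : ∀ z : W, c.getVert 2 ∈ B z → (T.deleteEdges {s(x, y)}).Reachable z y := by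
    intro z hz
    rcases ChordalAux.reach_side hT x y z with hzx | hzy
    · exfalso
      obtain ⟨q⟩ := (td.coherent (c.getVert 2)).preconnected ⟨z, hz⟩ ⟨x2, hx2⟩
      have hxin : x ∈ {w | c.getVert 2 ∈ B w} :=
        ChordalAux.cross_mem hA hxy q hzx hx2y
      exact h02 x ⟨hx_bag, hxin⟩
    · exact hzy
  -- x ∈ S(v₁)
  have hadj01 : (G ⊔ SimpleGraph.fromRel (fun u v => ∃ x, u ∈ B x ∧ v ∈ B x)).Adj
      (c.getVert 0) (c.getVert 1) := c.adj_getVert_succ (by omega)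
  have hadj12 : (G ⊔ SimpleGraph.fromRel (fun u v => ∃ x, u ∈ B x ∧ v ∈ B x)).Adj
      (c.getVert 1) (c.getVert 2) := c.adj_getVert_succ (by omega)
  obtain ⟨z01, hz01a, hz01b⟩ := bagOfAdj hadj01
  obtain ⟨z12, hz12a, hz12b⟩ := bagOfAdj hadj12
  have hxS1 : c.getVert 1 ∈ B x := by
    obtain ⟨q⟩ := (td.coherent (c.getVert 1)).preconnected ⟨z01, hz01b⟩ ⟨z12, hz12a⟩
    exact ChordalAux.cross_mem hA hxy q (hS0x z01 hz01a) (hS2y z12 hz12b)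
  -- find minimal i ≥ 2 with S(vᵢ) meeting the x-side
  have hQn : ∃ zz : W, c.getVert ((n - 2) + 2) ∈ B zz ∧
      (T.deleteEdges {s(x, y)}).Reachable zz x := by
    refine ⟨x, ?_, Reachable.refl _⟩
    have : (n - 2) + 2 = n := by omega
    rw [this, hVn]
    exact hx_bag
  have hQex : ∃ k : ℕ, ∃ zz : W, c.getVert (k + 2) ∈ B zz ∧
      (T.deleteEdges {s(x, y)}).Reachable zz x := ⟨n - 2, hQn⟩
  obtain ⟨aw, hawB, hawR⟩ := Nat.find_spec hQex
  set k := Nat.find hQex with hk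
  have hkmin : ∀ j, j < k → ¬ ∃ zz : W, c.getVert (j + 2) ∈ B zz ∧
      (T.deleteEdges {s(x, y)}).Reachable zz x := fun j hj => Nat.find_min hQex hj
  have hk_le : k ≤ n - 2 := Nat.find_min' hQex hQn
  have hk1 : 1 ≤ k := by
    rcases Nat.eq_zero_or_pos k with h0 | h
    · exfalso
      rw [h0] at hawB
      exact ChordalAux.not_reach_both hA hxy hawR (hS2y aw (by simpa using hawB))
    · exact h
  have hklt : k < n - 2 := by
    rcases Nat.lt_or_ge k (n - 2) with h | h
    · exact h
    · exfalso
      have hkn : k = n - 2 := by omega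
      -- v_{n-1} and v_n = v_0 share a bag, giving a witness at j = n - 3 < k
      have hadjlast : (G ⊔ SimpleGraph.fromRel (fun u v => ∃ x, u ∈ B x ∧ v ∈ B x)).Adj
          (c.getVert (n - 1)) (c.getVert ((n - 1) + 1)) := c.adj_getVert_succ (by omega)
      obtain ⟨zl, hzl1, hzl2⟩ := bagOfAdj hadjlast
      have hzl0 : c.getVert 0 ∈ B zl := by
        have : (n - 1) + 1 = n := by omega
        rwa [this, hVn] at hzl2
      have : ∃ zz : W, c.getVert ((n - 3) + 2) ∈ B zz ∧
          (T.deleteEdges {s(x, y)}).Reachable zz x := by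
        refine ⟨zl, ?_, hS0x zl hzl0⟩
        have : (n - 3) + 2 = n - 1 := by omega
        rw [this]
        exact hzl1
      exact hkmin (n - 3) (by omega) this
  -- x ∈ S(v_{k+2})
  have hadjk : (G ⊔ SimpleGraph.fromRel (fun u v => ∃ x, u ∈ B x ∧ v ∈ B x)).Adj
      (c.getVert (k + 1)) (c.getVert (k + 2)) := by
    have := c.adj_getVert_succ (i := k + 1) (by omega)
    exact this
  obtain ⟨bw, hbw1, hbw2⟩ := bagOfAdj hadjk
  have hbwy : (T.deleteEdges {s(x, y)}).Reachable bw y := by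
    rcases ChordalAux.reach_side hT x y bw with h | h
    · exfalso
      exact hkmin (k - 1) (by omega) ⟨bw, by
        have : (k - 1) + 2 = k + 1 := by omega
        rw [this]
        exact hbw1, h⟩
    · exact h
  have hxSk : c.getVert (k + 2) ∈ B x := by
    obtain ⟨q⟩ := (td.coherent (c.getVert (k + 2))).preconnected ⟨aw, hawB⟩ ⟨bw, hbw2⟩
    exact ChordalAux.cross_mem hA hxy q hawR hbwy
  -- the chord v₁ -- v_{k+2}
  have hne1k : c.getVert 1 ≠ c.getVert (k + 2) := by
    intro h
    have := hinj (by omega) (by omega) h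
    omega
  have hadjchord : (G ⊔ SimpleGraph.fromRel (fun u v => ∃ x, u ∈ B x ∧ v ∈ B x)).Adj
      (c.getVert 1) (c.getVert (k + 2)) :=
    by rw [sup_adj, SimpleGraph.fromRel_adj]; exact Or.inr ⟨hne1k, Or.inl ⟨x, hxS1, hxSk⟩⟩
  exact nonadj 1 (k + 2) (by omega) (by omega) (by omega) (by omega) (by omega) (by omega)
    (hcon _ _ (memsup 1 (by omega)) (memsup (k + 2) (by omega)) hadjchord)
end

section
/- Let (T,B) be a tree decomposition of a graph G, let {x,y} be an edge of T, and let {u1,v1},…,{um,vm} be edges of G with ui ∈ B(x) and vi ∈ B(y) for all i. Replace edge {x,y} by a path x, z1, …, zm, y with new nodes z1,…,zm and set B(zi) = (B(x) ∩ B(y)) ∪ {v1,…,vi, ui,…,um}. Then the resulting pair is again a tree decomposition of G, and every edge {ui,vi} is covered by the bag B(zi). -/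
/-- The tree obtained from `T` by replacing the edge `{x,y}` by the path
`x, z_0, …, z_{m-1}, y`, where the subdivision nodes are the elements of
`Fin m` (when `m = 0` the edge `{x,y}` is kept). -/
def subdividedTree {W : Type*} [DecidableEq W] (T : SimpleGraph W) (x y : W)
    (m : ℕ) : SimpleGraph (W ⊕ Fin m) :=
  SimpleGraph.fromRel (fun a b =>
    match a, b with
    | Sum.inl a, Sum.inl b => T.Adj a b ∧ (s(a, b) ≠ s(x, y) ∨ m = 0)
    | Sum.inl a, Sum.inr i => (a = x ∧ (i : ℕ) = 0) ∨ (a = y ∧ (i : ℕ) = m - 1)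
    | Sum.inr i, Sum.inr j => (i : ℕ) + 1 = (j : ℕ)
    | Sum.inr _, Sum.inl _ => False)

/-- The bags of the subdivided decomposition: old nodes keep their bags, and
the `i`-th subdivision node gets `(B x ∩ B y) ∪ {v_0,…,v_i} ∪ {u_i,…,u_{m-1}}`. -/
def subdividedBags {V W : Type*} (B : W → Set V) (x y : W) {m : ℕ}
    (u v : Fin m → V) : W ⊕ Fin m → Set V :=
  fun a =>
    match a with
    | Sum.inl w => B w
    | Sum.inr i => (B x ∩ B y) ∪ {p | ∃ j : Fin m, j ≤ i ∧ v j = p} ∪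
        {p | ∃ j : Fin m, i ≤ j ∧ u j = p}

section helpers

variable {W : Type*} [DecidableEq W] {T : SimpleGraph W} {x y : W} {m : ℕ}

lemma subT_adj_ll {a b : W} :
    (subdividedTree T x y m).Adj (Sum.inl a) (Sum.inl b) ↔
      T.Adj a b ∧ (s(a, b) ≠ s(x, y) ∨ m = 0) := by
  constructor
  · rintro ⟨hne, ⟨h1, h2⟩ | ⟨h1, h2⟩⟩
    · exact ⟨h1, h2⟩
    · exact ⟨h1.symm, by rw [Sym2.eq_swap]; exact h2⟩
  · intro h
    exact ⟨by simpa using h.1.ne, Or.inl h⟩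

lemma subT_adj_lr {a : W} {i : Fin m} :
    (subdividedTree T x y m).Adj (Sum.inl a) (Sum.inr i) ↔
      (a = x ∧ (i : ℕ) = 0) ∨ (a = y ∧ (i : ℕ) = m - 1) := by
  constructor
  · rintro ⟨hne, h | h⟩
    · exact h
    · exact h.elim
  · intro h
    exact ⟨by simp, Or.inl h⟩

lemma subT_adj_rl {a : W} {i : Fin m} :
    (subdividedTree T x y m).Adj (Sum.inr i) (Sum.inl a) ↔
      (a = x ∧ (i : ℕ) = 0) ∨ (a = y ∧ (i : ℕ) = m - 1) := by
  rw [SimpleGraph.adj_comm]; exact subT_adj_lr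

lemma subT_adj_rr {i j : Fin m} :
    (subdividedTree T x y m).Adj (Sum.inr i) (Sum.inr j) ↔
      (i : ℕ) + 1 = (j : ℕ) ∨ (j : ℕ) + 1 = (i : ℕ) := by
  constructor
  · rintro ⟨hne, h | h⟩
    · exact Or.inl h
    · exact Or.inr h
  · intro h
    refine ⟨?_, ?_⟩
    · simp only [ne_eq, Sum.inr.injEq]
      rintro rfl
      omega
    · exact h.imp id id

lemma reach_lift {A B : Type*} {H : SimpleGraph A} {K : SimpleGraph B} (f : A → B)
    (h : ∀ a b, H.Adj a b → K.Reachable (f a) (f b)) {a b : A}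
    (hr : H.Reachable a b) : K.Reachable (f a) (f b) := by
  obtain ⟨w⟩ := hr
  induction w with
  | nil => exact SimpleGraph.Reachable.refl _
  | cons ha _ ih => exact (h _ _ ha).trans ih

lemma reach_chain {A : Type*} {H : SimpleGraph A} (f : ℕ → A) :
    ∀ n, (∀ k, k < n → H.Adj (f k) (f (k + 1))) → H.Reachable (f 0) (f n) := by
  intro n
  induction n with
  | zero => intro _; exact SimpleGraph.Reachable.refl _
  | succ n ih =>
    intro h
    exact (ih (fun k hk => h k (by omega))).trans (h n (by omega)).reachable

lemma del_adj {A : Type*} {H : SimpleGraph A} {e : Sym2 A} {c d : A} :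
    (H \ SimpleGraph.fromEdgeSet {e}).Adj c d ↔ H.Adj c d ∧ s(c, d) ≠ e := by
  simp only [SimpleGraph.sdiff_adj, SimpleGraph.fromEdgeSet_adj, Set.mem_singleton_iff]
  constructor
  · rintro ⟨h1, h2⟩; exact ⟨h1, fun he => h2 ⟨he, h1.ne⟩⟩
  · rintro ⟨h1, h2⟩; exact ⟨h1, fun he => h2 he.1⟩

end helpers

/-- Subdividing an edge `{x,y}` of a tree decomposition of `G` by a path of new
nodes `z_0, …, z_{m-1}` with bags `B(z_i) = (B x ∩ B y) ∪ {v_0,…,v_i,u_i,…,u_{m-1}}`,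
where `{u_i, v_i}` are edges of `G` with `u_i ∈ B x` and `v_i ∈ B y`, yields again
a tree decomposition of `G`, and every edge `{u_i, v_i}` is covered by the bag of `z_i`. -/
theorem treeDecomp_subdivide {V W : Type*} [DecidableEq W] (G : SimpleGraph V)
    (T : SimpleGraph W) (B : W → Set V) (td : TreeDecomp G T B)
    (x y : W) (hxy : T.Adj x y) (m : ℕ) (u v : Fin m → V)
    (hedge : ∀ i, G.Adj (u i) (v i)) (hu : ∀ i, u i ∈ B x) (hv : ∀ i, v i ∈ B y) :
    TreeDecomp G (subdividedTree T x y m) (subdividedBags B x y u v) ∧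
      ∀ i : Fin m, u i ∈ subdividedBags B x y u v (Sum.inr i) ∧
        v i ∈ subdividedBags B x y u v (Sum.inr i) := by
  classical
  set N := subdividedTree T x y m with hN
  -- every edge of the tree T is a bridge
  have hTb : ∀ ⦃a b : W⦄, T.Adj a b →
      ¬ (T \ SimpleGraph.fromEdgeSet {s(a, b)}).Reachable a b := by
    intro a b hab
    exact (SimpleGraph.isBridge_iff.mp
      ((SimpleGraph.isAcyclic_iff_forall_adj_isBridge.mp td.tree.IsAcyclic) hab))
  -- chain reachability inside induced subgraphs
  have chainReach : ∀ (S : Set (W ⊕ Fin m)) (i k : Fin m) (hik : i ≤ k)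
      (hmem : ∀ l : Fin m, i ≤ l → l ≤ k → Sum.inr l ∈ S),
      (N.induce S).Reachable ⟨Sum.inr i, hmem i le_rfl hik⟩ ⟨Sum.inr k, hmem k hik le_rfl⟩ := by
    intro S i k hik hmem
    have hik' : (i : ℕ) ≤ (k : ℕ) := hik
    have hm' : ∀ n : ℕ, min ((i : ℕ) + n) (k : ℕ) < m :=
      fun n => lt_of_le_of_lt (min_le_right _ _) k.isLt
    have hmm : ∀ n : ℕ, Sum.inr (⟨min ((i : ℕ) + n) (k : ℕ), hm' n⟩ : Fin m) ∈ S := by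
      intro n
      refine hmem _ ?_ ?_ <;> · rw [Fin.le_def]; simp only [Fin.val_mk]; omega
    let f : ℕ → {a // a ∈ S} := fun n => ⟨_, hmm n⟩
    have key := reach_chain (H := N.induce S) f ((k : ℕ) - (i : ℕ)) ?_
    · have h0 : f 0 = ⟨Sum.inr i, hmem i le_rfl hik⟩ := by
        apply Subtype.ext
        simp only [f]
        congr 1
        exact Fin.ext (by simp only [Fin.val_mk]; omega)
      have h1 : f ((k : ℕ) - (i : ℕ)) = ⟨Sum.inr k, hmem k hik le_rfl⟩ := by
        apply Subtype.ext
        simp only [f]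
        congr 1
        exact Fin.ext (by simp only [Fin.val_mk]; omega)
      rwa [h0, h1] at key
    · intro n hn
      show N.Adj (Sum.inr ⟨min ((i : ℕ) + n) (k : ℕ), hm' n⟩)
        (Sum.inr ⟨min ((i : ℕ) + (n + 1)) (k : ℕ), hm' (n + 1)⟩)
      rw [hN, subT_adj_rr]
      left
      simp only [Fin.val_mk]
      omega
  -- chain reachability in N itself
  have NchainReach : ∀ i k : Fin m, i ≤ k → N.Reachable (Sum.inr i) (Sum.inr k) := by
    intro i k h
    have := chainReach Set.univ i k h (fun _ _ _ => trivial)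
    exact reach_lift (Subtype.val) (fun a b hab => (SimpleGraph.comap_adj.mp hab).reachable) this
  -- deleting an old edge
  have key_ll : ∀ a b : W, T.Adj a b → (s(a, b) ≠ s(x, y) ∨ m = 0) →
      ¬ (N \ SimpleGraph.fromEdgeSet {s(Sum.inl a, Sum.inl b)}).Reachable
        (Sum.inl a) (Sum.inl b) := by
    intro a b hab hcond hr
    apply hTb hab
    refine reach_lift (Sum.elim id (fun _ => x)) ?_ hr
    rintro (c | i) (d | j) hcd <;> rw [del_adj] at hcd
    · obtain ⟨hadj, hne⟩ := hcd
      rw [hN, subT_adj_ll] at hadj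
      refine (del_adj.mpr ⟨hadj.1, ?_⟩).reachable
      intro h
      exact hne (by rw [← Sym2.map_pair_eq Sum.inl, ← Sym2.map_pair_eq Sum.inl, h])
    · obtain ⟨hadj, hne⟩ := hcd
      rw [hN, subT_adj_lr] at hadj
      have hm0 : 0 < m := j.pos
      have hsab : s(a, b) ≠ s(x, y) := hcond.resolve_right (by omega)
      rcases hadj with ⟨rfl, _⟩ | ⟨rfl, _⟩
      · exact SimpleGraph.Reachable.refl _
      · exact (del_adj.mpr ⟨hxy.symm, fun h => hsab (h.symm.trans Sym2.eq_swap)⟩).reachable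
    · obtain ⟨hadj, hne⟩ := hcd
      rw [hN, subT_adj_rl] at hadj
      have hm0 : 0 < m := i.pos
      have hsab : s(a, b) ≠ s(x, y) := hcond.resolve_right (by omega)
      rcases hadj with ⟨rfl, _⟩ | ⟨rfl, _⟩
      · exact SimpleGraph.Reachable.refl _
      · exact (del_adj.mpr ⟨hxy, fun h => hsab h.symm⟩).reachable
    · exact SimpleGraph.Reachable.refl _
  -- deleting an edge between an old node and a subdivision node
  have key_lr : ∀ (a : W) (i : Fin m), ((a = x ∧ (i : ℕ) = 0) ∨ (a = y ∧ (i : ℕ) = m - 1)) →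
      ¬ (N \ SimpleGraph.fromEdgeSet {s(Sum.inl a, Sum.inr i)}).Reachable
        (Sum.inl a) (Sum.inr i) := by
    rintro a i (⟨ha, hi0⟩ | ⟨ha, hi1⟩) hr
    · obtain rfl := ha.symm
      refine hTb hxy (reach_lift (Sum.elim id (fun _ => y)) ?_ hr)
      rintro (c | k) (d | l) hcd <;> rw [del_adj] at hcd
      · obtain ⟨hadj, hne⟩ := hcd
        rw [hN, subT_adj_ll] at hadj
        have hsab : s(c, d) ≠ s(x, y) := hadj.2.resolve_right (by have := i.pos; omega)
        exact (del_adj.mpr ⟨hadj.1, hsab⟩).reachable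
      · obtain ⟨hadj, hne⟩ := hcd
        rw [hN, subT_adj_lr] at hadj
        rcases hadj with ⟨rfl, hl⟩ | ⟨rfl, _⟩
        · exact absurd (by rw [show l = i from Fin.ext (by omega)]) hne
        · exact SimpleGraph.Reachable.refl _
      · obtain ⟨hadj, hne⟩ := hcd
        rw [hN, subT_adj_rl] at hadj
        rcases hadj with ⟨rfl, hk⟩ | ⟨rfl, _⟩
        · exact absurd (by rw [show k = i from Fin.ext (by omega), Sym2.eq_swap]) hne
        · exact SimpleGraph.Reachable.refl _
      · exact SimpleGraph.Reachable.refl _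
    · obtain rfl := ha.symm
      refine hTb hxy.symm (reach_lift (Sum.elim id (fun _ => x)) ?_ hr)
      rintro (c | k) (d | l) hcd <;> rw [del_adj] at hcd
      · obtain ⟨hadj, hne⟩ := hcd
        rw [hN, subT_adj_ll] at hadj
        have hsab : s(c, d) ≠ s(x, y) := hadj.2.resolve_right (by have := i.pos; omega)
        exact (del_adj.mpr ⟨hadj.1, fun h => hsab (h.trans Sym2.eq_swap)⟩).reachable
      · obtain ⟨hadj, hne⟩ := hcd
        rw [hN, subT_adj_lr] at hadj
        rcases hadj with ⟨rfl, _⟩ | ⟨rfl, hl⟩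
        · exact SimpleGraph.Reachable.refl _
        · exact absurd (by rw [show l = i from Fin.ext (by omega)]) hne
      · obtain ⟨hadj, hne⟩ := hcd
        rw [hN, subT_adj_rl] at hadj
        rcases hadj with ⟨rfl, _⟩ | ⟨rfl, hk⟩
        · exact SimpleGraph.Reachable.refl _
        · exact absurd (by rw [show k = i from Fin.ext (by omega), Sym2.eq_swap]) hne
      · exact SimpleGraph.Reachable.refl _
  -- deleting an edge between two subdivision nodes
  have key_rr : ∀ (i j : Fin m), (i : ℕ) + 1 = (j : ℕ) →
      ¬ (N \ SimpleGraph.fromEdgeSet {s(Sum.inr i, Sum.inr j)}).Reachable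
        (Sum.inr i) (Sum.inr j) := by
    intro i j hij hr
    apply hTb hxy
    have hres : (T \ SimpleGraph.fromEdgeSet {s(x, y)}).Reachable
        (if (i : ℕ) ≤ (i : ℕ) then x else y) (if (j : ℕ) ≤ (i : ℕ) then x else y) := by
      refine reach_lift (Sum.elim id (fun k : Fin m => if (k : ℕ) ≤ (i : ℕ) then x else y)) ?_ hr
      rintro (c | k) (d | l) hcd <;> rw [del_adj] at hcd
      · obtain ⟨hadj, hne⟩ := hcd
        rw [hN, subT_adj_ll] at hadj
        have hsab : s(c, d) ≠ s(x, y) := hadj.2.resolve_right (by have := i.pos; omega)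
        exact (del_adj.mpr ⟨hadj.1, hsab⟩).reachable
      · obtain ⟨hadj, hne⟩ := hcd
        rw [hN, subT_adj_lr] at hadj
        have hjm : (j : ℕ) ≤ m - 1 := by have := j.isLt; omega
        rcases hadj with ⟨rfl, hl⟩ | ⟨rfl, hl⟩
        · simp only [Sum.elim_inl, Sum.elim_inr, hl, id]
          rw [if_pos (by omega)]
        · simp only [Sum.elim_inl, Sum.elim_inr, id]
          rw [if_neg (by omega)]
      · obtain ⟨hadj, hne⟩ := hcd
        rw [hN, subT_adj_rl] at hadj
        have hjm : (j : ℕ) ≤ m - 1 := by have := j.isLt; omega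
        rcases hadj with ⟨rfl, hk⟩ | ⟨rfl, hk⟩
        · simp only [Sum.elim_inl, Sum.elim_inr, hk, id]
          rw [if_pos (by omega)]
        · simp only [Sum.elim_inl, Sum.elim_inr, id]
          rw [if_neg (by omega)]
      · obtain ⟨hadj, hne⟩ := hcd
        rw [hN, subT_adj_rr] at hadj
        simp only [Sum.elim_inr]
        rcases hadj with hkl | hkl
        · by_cases hk : (k : ℕ) ≤ (i : ℕ) <;> by_cases hl : (l : ℕ) ≤ (i : ℕ)
          · rw [if_pos hk, if_pos hl]
          · exfalso
            apply hne
            have : k = i := Fin.ext (by omega)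
            have : l = j := Fin.ext (by omega)
            subst this; subst ‹k = i›; rfl
          · omega
          · rw [if_neg hk, if_neg hl]
        · by_cases hk : (k : ℕ) ≤ (i : ℕ) <;> by_cases hl : (l : ℕ) ≤ (i : ℕ)
          · rw [if_pos hk, if_pos hl]
          · omega
          · exfalso
            apply hne
            have : l = i := Fin.ext (by omega)
            have : k = j := Fin.ext (by omega)
            subst this; subst ‹l = i›
            rw [Sym2.eq_swap]
          · rw [if_neg hk, if_neg hl]
    rwa [if_pos le_rfl, if_neg (by omega)] at hres
  -- connectivity of N
  have xyReach : N.Reachable (Sum.inl x) (Sum.inl y) := by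
    rcases Nat.eq_zero_or_pos m with hm | hm
    · rw [hN]
      exact (subT_adj_ll.mpr ⟨hxy, Or.inr hm⟩).reachable
    · have h0 : N.Adj (Sum.inl x) (Sum.inr ⟨0, hm⟩) := by
        rw [hN]; exact subT_adj_lr.mpr (Or.inl ⟨rfl, rfl⟩)
      have h1 : N.Adj (Sum.inr ⟨m - 1, by omega⟩) (Sum.inl y) := by
        rw [hN]; exact subT_adj_rl.mpr (Or.inr ⟨rfl, rfl⟩)
      exact h0.reachable.trans ((NchainReach ⟨0, hm⟩ ⟨m - 1, by omega⟩
        (by rw [Fin.le_def]; simp)).trans h1.reachable)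
  have preconn : ∀ a, N.Reachable (Sum.inl x) a := by
    rintro (w | i)
    · refine reach_lift Sum.inl ?_ (td.tree.isConnected.preconnected x w)
      intro a b hab
      by_cases h : s(a, b) = s(x, y) ∧ m ≠ 0
      · rcases Sym2.eq_iff.mp h.1 with ⟨rfl, rfl⟩ | ⟨rfl, rfl⟩
        · exact xyReach
        · exact xyReach.symm
      · refine SimpleGraph.Adj.reachable ?_
        rw [hN]
        exact subT_adj_ll.mpr ⟨hab, by tauto⟩
    · have hm : 0 < m := i.pos
      have h0 : N.Adj (Sum.inl x) (Sum.inr ⟨0, hm⟩) := by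
        rw [hN]; exact subT_adj_lr.mpr (Or.inl ⟨rfl, rfl⟩)
      exact h0.reachable.trans (NchainReach ⟨0, hm⟩ i (by rw [Fin.le_def]; simp))
  have htree : N.IsTree := by
    constructor
    · have : Nonempty (W ⊕ Fin m) := ⟨Sum.inl x⟩
      exact ⟨fun a b => (preconn a).symm.trans (preconn b)⟩
    · rw [SimpleGraph.isAcyclic_iff_forall_adj_isBridge]
      rintro (a | i) (b | j) hadj
      · have h := hadj
        rw [hN, subT_adj_ll] at h
        exact SimpleGraph.isBridge_iff.mpr (key_ll a b h.1 h.2)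
      · have h := hadj
        rw [hN, subT_adj_lr] at h
        exact SimpleGraph.isBridge_iff.mpr (key_lr a j h)
      · have h := hadj
        rw [hN, subT_adj_rl] at h
        rw [Sym2.eq_swap]
        exact SimpleGraph.isBridge_iff.mpr (key_lr b i h)
      · have h := hadj
        rw [hN, subT_adj_rr] at h
        rcases h with h | h
        · exact SimpleGraph.isBridge_iff.mpr (key_rr i j h)
        · rw [Sym2.eq_swap]
          exact SimpleGraph.isBridge_iff.mpr (key_rr j i h)
  refine ⟨⟨htree, ?_, ?_, ?_⟩, ?_⟩
  · intro p
    obtain ⟨w, hw⟩ := td.vertexCover p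
    exact ⟨Sum.inl w, hw⟩
  · intro p q hpq
    obtain ⟨w, hw⟩ := td.edgeCover hpq
    exact ⟨Sum.inl w, hw⟩
  · -- coherence
    intro p
    set S : Set (W ⊕ Fin m) := {a | p ∈ subdividedBags B x y u v a} with hS
    have hTS := td.coherent p
    have step_ll : ∀ (a b : W) (ha : Sum.inl a ∈ S) (hb : Sum.inl b ∈ S),
        (N.induce S).Reachable ⟨Sum.inl a, ha⟩ ⟨Sum.inl b, hb⟩ := by
      intro a b ha hb
      refine reach_lift
        (fun w : {w : W | p ∈ B w} => (⟨Sum.inl w.1, w.2⟩ : {a // a ∈ S})) ?_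
        (hTS.preconnected ⟨a, ha⟩ ⟨b, hb⟩)
      intro c d hcd
      have hcd' : T.Adj c.1 d.1 := hcd
      by_cases hc : s(c.1, d.1) = s(x, y) ∧ m ≠ 0
      · have hm : 0 < m := Nat.pos_of_ne_zero hc.2
        rcases Sym2.eq_iff.mp hc.1 with ⟨h1, h2⟩ | ⟨h1, h2⟩
        · subst h1; subst h2
          have hall : ∀ l : Fin m, Sum.inr l ∈ S := fun l => Or.inl (Or.inl ⟨c.2, d.2⟩)
          have e0 : (N.induce S).Adj ⟨Sum.inl c.1, c.2⟩ ⟨Sum.inr ⟨0, hm⟩, hall _⟩ := by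
            show N.Adj _ _
            rw [hN]; exact subT_adj_lr.mpr (Or.inl ⟨rfl, rfl⟩)
          have e1 : (N.induce S).Adj ⟨Sum.inr ⟨m - 1, by omega⟩, hall _⟩ ⟨Sum.inl d.1, d.2⟩ := by
            show N.Adj _ _
            rw [hN]; exact subT_adj_rl.mpr (Or.inr ⟨rfl, rfl⟩)
          have hmid := chainReach S ⟨0, hm⟩ ⟨m - 1, by omega⟩
            (by rw [Fin.le_def]; simp) (fun l _ _ => hall l)
          exact e0.reachable.trans (hmid.trans e1.reachable)
        · subst h1; subst h2
          have hall : ∀ l : Fin m, Sum.inr l ∈ S := fun l => Or.inl (Or.inl ⟨d.2, c.2⟩)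
          have e0 : (N.induce S).Adj ⟨Sum.inl d.1, d.2⟩ ⟨Sum.inr ⟨0, hm⟩, hall _⟩ := by
            show N.Adj _ _
            rw [hN]; exact subT_adj_lr.mpr (Or.inl ⟨rfl, rfl⟩)
          have e1 : (N.induce S).Adj ⟨Sum.inr ⟨m - 1, by omega⟩, hall _⟩ ⟨Sum.inl c.1, c.2⟩ := by
            show N.Adj _ _
            rw [hN]; exact subT_adj_rl.mpr (Or.inr ⟨rfl, rfl⟩)
          have hmid := chainReach S ⟨0, hm⟩ ⟨m - 1, by omega⟩
            (by rw [Fin.le_def]; simp) (fun l _ _ => hall l)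
          exact (e0.reachable.trans (hmid.trans e1.reachable)).symm
      · refine SimpleGraph.Adj.reachable ?_
        show N.Adj (Sum.inl c.1) (Sum.inl d.1)
        rw [hN]
        exact subT_adj_ll.mpr ⟨hcd', by tauto⟩
    have step_r : ∀ (i : Fin m) (hi : Sum.inr i ∈ S), ∃ (t : W) (ht : Sum.inl t ∈ S),
        (N.induce S).Reachable ⟨Sum.inr i, hi⟩ ⟨Sum.inl t, ht⟩ := by
      intro i hi
      have hm : 0 < m := i.pos
      have hi' : ((p ∈ B x ∧ p ∈ B y) ∨ ∃ j : Fin m, j ≤ i ∧ v j = p) ∨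
          ∃ j : Fin m, i ≤ j ∧ u j = p := hi
      rcases hi' with hleft | ⟨j, hij, hj⟩
      · have hpy : Sum.inl y ∈ S := by
          rcases hleft with h | ⟨j, hji, hj⟩
          · exact h.2
          · show p ∈ B y
            rw [← hj]; exact hv j
        have hall : ∀ l : Fin m, i ≤ l → Sum.inr l ∈ S := by
          intro l hl
          rcases hleft with h | ⟨j, hji, hj⟩
          · exact Or.inl (Or.inl h)
          · exact Or.inl (Or.inr ⟨j, le_trans hji hl, hj⟩)
        have hil : i ≤ (⟨m - 1, by omega⟩ : Fin m) := by
          rw [Fin.le_def]; simp only [Fin.val_mk]; have := i.isLt; omega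
        have hmid := chainReach S i ⟨m - 1, by omega⟩ hil (fun l h1 _ => hall l h1)
        have e1 : (N.induce S).Adj ⟨Sum.inr ⟨m - 1, by omega⟩, hall _ hil⟩ ⟨Sum.inl y, hpy⟩ := by
          show N.Adj _ _
          rw [hN]; exact subT_adj_rl.mpr (Or.inr ⟨rfl, rfl⟩)
        exact ⟨y, hpy, hmid.trans e1.reachable⟩
      · have hpx : Sum.inl x ∈ S := by
          show p ∈ B x
          rw [← hj]; exact hu j
        have hall : ∀ l : Fin m, l ≤ i → Sum.inr l ∈ S :=
          fun l hl => Or.inr ⟨j, le_trans hl hij, hj⟩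
        have h0i : (⟨0, hm⟩ : Fin m) ≤ i := by rw [Fin.le_def]; simp
        have hmid := (chainReach S ⟨0, hm⟩ i h0i (fun l _ h2 => hall l h2)).symm
        have e0 : (N.induce S).Adj ⟨Sum.inr ⟨0, hm⟩, hall _ h0i⟩ ⟨Sum.inl x, hpx⟩ := by
          show N.Adj _ _
          rw [hN]; exact subT_adj_rl.mpr (Or.inl ⟨rfl, rfl⟩)
        exact ⟨x, hpx, hmid.trans e0.reachable⟩
    have hpre : ∀ a b : {a // a ∈ S}, (N.induce S).Reachable a b := by
      rintro ⟨(a | i), ha⟩ ⟨(b | j), hb⟩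
      · exact step_ll a b ha hb
      · obtain ⟨t, ht, hrt⟩ := step_r j hb
        exact (step_ll a t ha ht).trans hrt.symm
      · obtain ⟨t, ht, hrt⟩ := step_r i ha
        exact hrt.trans (step_ll t b ht hb)
      · obtain ⟨t, ht, hrt⟩ := step_r i ha
        obtain ⟨t', ht', hrt'⟩ := step_r j hb
        exact hrt.trans ((step_ll t t' ht ht').trans hrt'.symm)
    obtain ⟨⟨w, hw⟩⟩ := hTS.nonempty
    have : Nonempty {a // a ∈ S} := ⟨⟨Sum.inl w, hw⟩⟩
    exact ⟨hpre⟩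
  · intro i
    constructor
    · exact Or.inr ⟨i, le_rfl, rfl⟩
    · exact Or.inl (Or.inr ⟨i, le_rfl, rfl⟩)
end
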